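/- In an acyclic b-matching preference instance, every configuration C that is not stable admits a blocking pair that belongs to the unique stable configuration of the instance. -/

import Mathlib

/-!
A formalization of b-matching preference instances (peers, acceptance graph,
quotas, preference lists given by ranks), configurations, blocking pairs,
stability, active initiatives, loving pairs, and acyclicity.
-/

open Finset

/-- A b-matching preference instance on a finite set `P` of peers:
an acceptance graph `G`, quotas `b`, and for each peer `p` a rank function
(`rank p q` is the position of `q` in `p`'s preference list, smaller is better),
injective on the neighbors of `p` (strict preferences). -/
structure PrefInstance (P : Type*) [Fintype P] [DecidableEq P] where
  G : SimpleGraph P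
  b : P → ℕ
  rank : P → P → ℕ
  rank_injOn : ∀ p : P, Set.InjOn (rank p) {q | G.Adj p q}

namespace PrefInstance

variable {P : Type*} [Fintype P] [DecidableEq P] (I : PrefInstance P)

/-- `p` prefers `q` to `r` (both neighbors of `p`, `q` ranked better). -/
def Prefers (p q r : P) : Prop :=
  I.G.Adj p q ∧ I.G.Adj p r ∧ I.rank p q < I.rank p r

/-- The instance is acyclic: there is no preference cycle, i.e. no `k ≥ 3`
distinct peers `p_1, …, p_k` (indices modulo `k`) such that each `p_i`
prefers `p_{i+1}` to `p_{i-1}`. -/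
def Acyclic : Prop :=
  ¬ ∃ (k : ℕ) (f : ZMod k → P), 3 ≤ k ∧ Function.Injective f ∧
      ∀ i : ZMod k, I.Prefers (f i) (f (i + 1)) (f (i - 1))

/-- The mates of `p` in a set `C` of edges. -/
def mates (C : Finset (Sym2 P)) (p : P) : Finset P :=
  Finset.univ.filter fun q => s(p, q) ∈ C

/-- `C` is a configuration: a set of edges of the acceptance graph in which every
peer `p` has at most `b p` mates. -/
def IsConfig (C : Finset (Sym2 P)) : Prop :=
  (∀ e ∈ C, e ∈ I.G.edgeSet) ∧ ∀ p : P, (mates C p).card ≤ I.b p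

/-- `p` is under-mated in `C`: it has fewer than `b p` mates. -/
def UnderMated (C : Finset (Sym2 P)) (p : P) : Prop :=
  (mates C p).card < I.b p

/-- `p` is willing to pair with `q`: it is under-mated, or it prefers `q`
to its worst mate in `C`. -/
def Willing (C : Finset (Sym2 P)) (p q : P) : Prop :=
  I.UnderMated C p ∨ ∃ w ∈ mates C p, I.rank p q < I.rank p w

/-- `{p, q}` is a blocking pair for `C`: an edge of the acceptance graph not in
`C` such that each endpoint is under-mated or prefers the other to its worst mate. -/
def BlockingPair (C : Finset (Sym2 P)) (p q : P) : Prop :=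
  I.G.Adj p q ∧ s(p, q) ∉ C ∧ I.Willing C p q ∧ I.Willing C q p

/-- A configuration is stable if it admits no blocking pair. -/
def IsStable (C : Finset (Sym2 P)) : Prop :=
  I.IsConfig C ∧ ∀ p q : P, ¬ I.BlockingPair C p q

/-- The edges to be dropped at `p` when `p` gets a new mate: none if `p` is
under-mated, otherwise the edge joining `p` to its worst mate in `C`. -/
def dropEdges (C : Finset (Sym2 P)) (p : P) : Finset (Sym2 P) :=
  if (mates C p).card < I.b p then ∅
  else ((mates C p).filter fun w => ∀ r ∈ mates C p, I.rank p r ≤ I.rank p w).image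
      fun w => s(p, w)

/-- The configuration produced by resolving the blocking pair `{p, q}` of `C`:
add the edge `{p, q}` and, for each of `p` and `q` already at full quota,
remove the edge joining it to its worst mate. -/
def resolve (C : Finset (Sym2 P)) (p q : P) : Finset (Sym2 P) :=
  insert s(p, q) (C \ (I.dropEdges C p ∪ I.dropEdges C q))

/-- `C'` is obtained from `C` by an active initiative. -/
def ActiveStep (C C' : Finset (Sym2 P)) : Prop :=
  ∃ p q : P, I.BlockingPair C p q ∧ C' = I.resolve C p q

/-- `{p, q}` is a loving pair: an edge of the acceptance graph whose endpoints
rank each other first. -/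
def LovingPair (p q : P) : Prop :=
  I.G.Adj p q ∧ (∀ r : P, I.G.Adj p r → I.rank p q ≤ I.rank p r) ∧
    ∀ r : P, I.G.Adj q r → I.rank q p ≤ I.rank q r

open scoped Classical in
/-- The best-mate initiative of peer `p` at configuration `C`: resolve the
blocking pair `{p, q}` where `q` is the peer `p` prefers most among all peers
forming a blocking pair with `p`; if `p` belongs to no blocking pair, `C` is
left unchanged. -/
noncomputable def bestMateInit (C : Finset (Sym2 P)) (p : P) : Finset (Sym2 P) :=
  if h : ∃ q : P, I.BlockingPair C p q ∧
      ∀ r : P, I.BlockingPair C p r → I.rank p q ≤ I.rank p r then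
    I.resolve C p h.choose
  else C

end PrefInstance

variable {P : Type*} [Fintype P] [DecidableEq P]

open PrefInstance

open Function in
lemma exists_loving (I : PrefInstance P) (hI : I.Acyclic) {x0 y0 : P}
    (hxy : I.G.Adj x0 y0) : ∃ p q, I.LovingPair p q := by
  classical
  by_contra hno
  push_neg at hno
  -- best neighbor function
  have hbest : ∀ x : P, (∃ y, I.G.Adj x y) →
      ∃ q, I.G.Adj x q ∧ ∀ r, I.G.Adj x r → I.rank x q ≤ I.rank x r := by
    rintro x ⟨y, hy⟩
    obtain ⟨q, hq, hmin⟩ := Finset.exists_min_image (Finset.univ.filter (I.G.Adj x))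
      (I.rank x) ⟨y, by simp [hy]⟩
    exact ⟨q, by simpa using hq, fun r hr => hmin r (by simp [hr])⟩
  set g : P → P := fun x => if h : ∃ y, I.G.Adj x y then (hbest x h).choose else x with hg
  have hadj : ∀ x (h : ∃ y, I.G.Adj x y),
      I.G.Adj x (g x) ∧ ∀ r, I.G.Adj x r → I.rank x (g x) ≤ I.rank x r := by
    intro x h
    simp only [hg, dif_pos h]
    exact (hbest x h).choose_spec
  have hnbr : ∀ x (h : ∃ y, I.G.Adj x y), ∃ y, I.G.Adj (g x) y :=
    fun x h => ⟨x, (hadj x h).1.symm⟩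
  have hgg : ∀ x (h : ∃ y, I.G.Adj x y), g (g x) ≠ x := by
    intro x h hggx
    refine hno x (g x) ⟨(hadj x h).1, (hadj x h).2, ?_⟩
    intro r hr
    have := (hadj (g x) (hnbr x h)).2 r hr
    rwa [hggx] at this
  -- the iterate sequence
  set a : ℕ → P := fun n => g^[n] x0 with ha
  have han : ∀ n, ∃ y, I.G.Adj (a n) y := by
    intro n
    induction n with
    | zero => exact ⟨y0, hxy⟩
    | succ n ih =>
      have : a (n+1) = g (a n) := Function.iterate_succ_apply' g n x0
      rw [this]; exact hnbr _ ih
  have hsucc : ∀ n, a (n+1) = g (a n) := fun n => Function.iterate_succ_apply' g n x0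
  have hstep : ∀ n, I.Prefers (a (n+1)) (a (n+2)) (a n) := by
    intro n
    have h1 : I.G.Adj (a (n+1)) (a (n+2)) := by
      rw [hsucc (n+1)]; exact (hadj _ (han (n+1))).1
    have h2 : I.G.Adj (a (n+1)) (a n) := by
      rw [hsucc n]; exact (hadj _ (han n)).1.symm
    have hle : I.rank (a (n+1)) (a (n+2)) ≤ I.rank (a (n+1)) (a n) := by
      rw [hsucc (n+1)]; exact (hadj _ (han (n+1))).2 _ h2
    have hne : a (n+2) ≠ a n := by
      rw [hsucc (n+1), hsucc n]; exact hgg _ (han n)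
    refine ⟨h1, h2, lt_of_le_of_ne hle ?_⟩
    intro heq
    exact hne (I.rank_injOn (a (n+1)) h1 h2 heq)
  -- find a periodic point
  obtain ⟨m, n, hmn, heq⟩ := Finite.exists_ne_map_eq_of_infinite a
  wlog hlt : m < n generalizing m n
  · exact this n m hmn.symm heq.symm (by omega)
  set y : P := a m with hy
  have hyper : IsPeriodicPt g (n - m) y := by
    show g^[n - m] y = y
    have : g^[n - m] (g^[m] x0) = g^[(n - m) + m] x0 := (Function.iterate_add_apply g (n-m) m x0).symm
    rw [hy, ha]
    simp only []
    rw [this, Nat.sub_add_cancel hlt.le]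
    exact heq.symm
  have hymem : y ∈ periodicPts g := ⟨n - m, by omega, hyper⟩
  set k : ℕ := minimalPeriod g y with hk
  have hk0 : 0 < k := minimalPeriod_pos_of_mem_periodicPts hymem
  have hper : g^[k] y = y := isPeriodicPt_minimalPeriod g y
  -- sequence based at y
  have hby : ∀ j, g^[j] y = a (m + j) := by
    intro j
    show g^[j] (g^[m] x0) = g^[m + j] x0
    rw [← Function.iterate_add_apply, Nat.add_comm]
  have hk1 : k ≠ 1 := by
    intro h1
    have : g y = y := by rw [← Function.iterate_one g]; rw [h1] at hper; exact hper
    have hadjy := (hadj y (han m)).1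
    rw [show g y = y from this] at hadjy
    exact I.G.loopless.irrefl y hadjy
  have hk2 : k ≠ 2 := by
    intro h2
    have : g (g y) = y := by
      have := hper; rw [h2] at this
      simpa [Function.iterate_succ_apply'] using this
    exact hgg y (han m) this
  have hk3 : 3 ≤ k := by omega
  haveI : NeZero k := ⟨by omega⟩
  set f : ZMod k → P := fun z => g^[z.val] y with hf
  have hmod : ∀ j, g^[j % k] y = g^[j] y := fun j => Function.iterate_mod_minimalPeriod_eq
  have hinj : Function.Injective f := by
    intro z w hzw
    simp only [hf] at hzw
    by_contra hne
    wlog hvlt : z.val < w.val generalizing z w with H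
    · have hvne : z.val ≠ w.val := fun h => hne (ZMod.val_injective _ h)
      exact H hzw.symm (Ne.symm hne) (by omega)
    have hwk : w.val < k := ZMod.val_lt w
    have : IsPeriodicPt g ((k - w.val) + z.val) y := by
      show g^[(k - w.val) + z.val] y = y
      rw [Function.iterate_add_apply, hzw, ← Function.iterate_add_apply,
        Nat.sub_add_cancel hwk.le]
      exact hper
    have hle := this.minimalPeriod_le (by omega)
    omega
  have hpref : ∀ z : ZMod k, I.Prefers (f z) (f (z + 1)) (f (z - 1)) := by
    intro z
    set j : ℕ := (z - 1).val with hj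
    have hone : (1 : ZMod k).val = 1 := by
      rw [ZMod.val_one_eq_one_mod]; exact Nat.mod_eq_of_lt (by omega)
    have hz : z.val = (j + 1) % k := by
      have : z = (z - 1) + 1 := by ring
      rw [this, ZMod.val_add, hone]
    have hz1 : (z + 1).val = (j + 2) % k := by
      rw [ZMod.val_add, hone, hz, Nat.mod_add_mod]
    have e1 : f z = g^[j + 1] y := by
      show g^[z.val] y = g^[j + 1] y; rw [hz, hmod]
    have e2 : f (z + 1) = g^[j + 2] y := by
      show g^[(z + 1).val] y = g^[j + 2] y; rw [hz1, hmod]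
    have e3 : f (z - 1) = g^[j] y := rfl
    rw [e1, e2, e3, hby, hby, hby]
    have := hstep (m + j)
    simpa [Nat.add_assoc] using this
  exact hI ⟨k, f, hk3, hinj, hpref⟩

lemma mem_mates {C : Finset (Sym2 P)} {p q : P} : q ∈ mates C p ↔ s(p, q) ∈ C := by
  simp [mates]

/-- The measure of an instance: total quota plus number of edges. -/
noncomputable def mu (I : PrefInstance P) : ℕ :=
  (∑ p, I.b p) + (Set.toFinite I.G.edgeSet).toFinset.card

/-- Remove all edges incident to a zero-quota peer. -/
def pruneZero (I : PrefInstance P) : PrefInstance P where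
  G := { Adj := fun x y => I.G.Adj x y ∧ I.b x ≠ 0 ∧ I.b y ≠ 0,
         symm := ⟨by rintro x y ⟨h, hx, hy⟩; exact ⟨h.symm, hy, hx⟩⟩,
         loopless := ⟨fun x h => I.G.loopless.irrefl x h.1⟩ }
  b := I.b
  rank := I.rank
  rank_injOn := fun p => (I.rank_injOn p).mono fun z hz => hz.1

/-- Remove the single edge `s(p,q)` and decrement the quotas of `p` and `q`. -/
def erasePQ (I : PrefInstance P) (p q : P) : PrefInstance P where
  G := { Adj := fun x y => I.G.Adj x y ∧ s(x, y) ≠ s(p, q),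
         symm := ⟨by rintro x y ⟨h, hne⟩; exact ⟨h.symm, by rwa [Sym2.eq_swap]⟩⟩,
         loopless := ⟨fun x h => I.G.loopless.irrefl x h.1⟩ }
  b := fun x => if x = p ∨ x = q then I.b x - 1 else I.b x
  rank := I.rank
  rank_injOn := fun r => (I.rank_injOn r).mono fun z hz => hz.1

lemma acyclic_of_le {I J : PrefInstance P} (hadj : ∀ x y, J.G.Adj x y → I.G.Adj x y)
    (hrank : J.rank = I.rank) (hI : I.Acyclic) : J.Acyclic := by
  rintro ⟨k, f, h3, hinj, hpref⟩
  refine hI ⟨k, f, h3, hinj, fun i => ?_⟩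
  obtain ⟨h1, h2, h3'⟩ := hpref i
  exact ⟨hadj _ _ h1, hadj _ _ h2, by rw [← hrank]; exact h3'⟩

lemma mu_lt_of_edges_lt {I J : PrefInstance P} (hb : J.b = I.b)
    (hsub : J.G.edgeSet ⊆ I.G.edgeSet) {e : Sym2 P} (he : e ∈ I.G.edgeSet)
    (hne : e ∉ J.G.edgeSet) : mu J < mu I := by
  have hss : (Set.toFinite J.G.edgeSet).toFinset ⊂ (Set.toFinite I.G.edgeSet).toFinset := by
    rw [Set.Finite.toFinset_ssubset_toFinset]
    exact ⟨hsub, fun h => hne (h he)⟩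
  have := Finset.card_lt_card hss
  unfold mu
  rw [hb]
  omega

lemma mu_prune_lt {I : PrefInstance P} {x y : P} (hadj : I.G.Adj x y) (hx : I.b x = 0) :
    mu (pruneZero I) < mu I := by
  refine mu_lt_of_edges_lt rfl ?_ (e := s(x, y)) hadj ?_
  · intro e
    induction e using Sym2.ind with
    | _ a b => exact fun h => h.1
  · intro h
    exact h.2.1 hx

lemma willing_prune {I : PrefInstance P} {C : Finset (Sym2 P)} {x y : P} :
    (pruneZero I).Willing C x y ↔ I.Willing C x y := Iff.rfl

lemma bne_of_willing {I : PrefInstance P} {C : Finset (Sym2 P)} {x y : P}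
    (hC : I.IsConfig C) (hw : I.Willing C x y) : I.b x ≠ 0 := by
  intro h0
  rcases hw with h | ⟨w, hwm, _⟩
  · rw [UnderMated, h0] at h; omega
  · have h1 : 1 ≤ (mates C x).card := Finset.card_pos.mpr ⟨w, hwm⟩
    have h2 := hC.2 x
    omega

lemma config_prune {I : PrefInstance P} {C : Finset (Sym2 P)} (hC : I.IsConfig C) :
    (pruneZero I).IsConfig C := by
  refine ⟨?_, hC.2⟩
  intro e he
  have hIe := hC.1 e he
  induction e using Sym2.ind with
  | _ x y =>
    rw [SimpleGraph.mem_edgeSet] at hIe ⊢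
    refine ⟨hIe, ?_, ?_⟩
    · have : 1 ≤ (mates C x).card := Finset.card_pos.mpr ⟨y, mem_mates.mpr he⟩
      have := hC.2 x; omega
    · have : 1 ≤ (mates C y).card :=
        Finset.card_pos.mpr ⟨x, mem_mates.mpr (by rwa [Sym2.eq_swap])⟩
      have := hC.2 y; omega

lemma blocking_prune_down {I : PrefInstance P} {C : Finset (Sym2 P)} {x y : P}
    (hC : I.IsConfig C) (hb : I.BlockingPair C x y) : (pruneZero I).BlockingPair C x y :=
  ⟨⟨hb.1, bne_of_willing hC hb.2.2.1, bne_of_willing hC hb.2.2.2⟩, hb.2.1, hb.2.2.1, hb.2.2.2⟩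

lemma blocking_prune_up {I : PrefInstance P} {C : Finset (Sym2 P)} {x y : P}
    (hb : (pruneZero I).BlockingPair C x y) : I.BlockingPair C x y :=
  ⟨hb.1.1, hb.2.1, hb.2.2.1, hb.2.2.2⟩

lemma stable_prune_down {I : PrefInstance P} {S : Finset (Sym2 P)} (hS : I.IsStable S) :
    (pruneZero I).IsStable S :=
  ⟨config_prune hS.1, fun x y hb => hS.2 x y (blocking_prune_up hb)⟩

section Erase

variable {I : PrefInstance P} {p q : P}

lemma mates_erase_of_ne {C : Finset (Sym2 P)} {x : P} (hxp : x ≠ p) (hxq : x ≠ q) :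
    mates (C.erase s(p, q)) x = mates C x := by
  ext r
  simp only [mem_mates, Finset.mem_erase]
  constructor
  · exact fun h => h.2
  · intro h
    refine ⟨?_, h⟩
    intro heq
    rcases Sym2.eq_iff.mp heq with ⟨rfl, rfl⟩ | ⟨rfl, rfl⟩
    · exact hxp rfl
    · exact hxq rfl

lemma mates_erase_left (hne : p ≠ q) {C : Finset (Sym2 P)} :
    mates (C.erase s(p, q)) p = (mates C p).erase q := by
  ext r
  simp only [mem_mates, Finset.mem_erase, ne_eq, Sym2.eq_iff]
  tauto

lemma mates_erase_right (hne : p ≠ q) {C : Finset (Sym2 P)} :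
    mates (C.erase s(p, q)) q = (mates C q).erase p := by
  rw [Sym2.eq_swap]
  exact mates_erase_left hne.symm

variable (hlov : I.LovingPair p q) (hbp : I.b p ≠ 0) (hbq : I.b q ≠ 0)

include hlov hbp hbq

lemma willing_erase_down {C : Finset (Sym2 P)} {x y : P}
    (hIadj : I.G.Adj x y) (hpqC : s(p, q) ∈ C)
    (hw : I.Willing C x y) : (erasePQ I p q).Willing (C.erase s(p, q)) x y := by
  have hne : p ≠ q := hlov.1.ne
  by_cases hxp : x = p
  · subst hxp
    have hqm : q ∈ mates C x := mem_mates.mpr hpqC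
    have hcard : (mates (C.erase s(x, q)) x).card = (mates C x).card - 1 := by
      rw [mates_erase_left hne, Finset.card_erase_of_mem hqm]
    rcases hw with h | ⟨w, hwm, hr⟩
    · left
      show (mates (C.erase s(x, q)) x).card < (erasePQ I x q).b x
      rw [hcard]
      have h1 : 1 ≤ (mates C x).card := Finset.card_pos.mpr ⟨q, hqm⟩
      have hb : (erasePQ I x q).b x = I.b x - 1 := if_pos (Or.inl rfl)
      rw [hb]
      have := h  -- UnderMated
      rw [UnderMated] at this
      omega
    · right
      have hwq : w ≠ q := by
        intro hwq; subst hwq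
        exact absurd hr (not_lt.mpr (hlov.2.1 y hIadj))
      refine ⟨w, ?_, hr⟩
      rw [mates_erase_left hne]
      exact Finset.mem_erase.mpr ⟨hwq, hwm⟩
  · by_cases hxq : x = q
    · subst hxq
      have hpm : p ∈ mates C x := mem_mates.mpr (by rwa [Sym2.eq_swap])
      have hcard : (mates (C.erase s(p, x)) x).card = (mates C x).card - 1 := by
        rw [mates_erase_right hne, Finset.card_erase_of_mem hpm]
      rcases hw with h | ⟨w, hwm, hr⟩
      · left
        show (mates (C.erase s(p, x)) x).card < (erasePQ I p x).b x
        rw [hcard]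
        have h1 : 1 ≤ (mates C x).card := Finset.card_pos.mpr ⟨p, hpm⟩
        have hb : (erasePQ I p x).b x = I.b x - 1 := if_pos (Or.inr rfl)
        rw [hb]
        rw [UnderMated] at h
        omega
      · right
        have hwp : w ≠ p := by
          intro hwp; subst hwp
          exact absurd hr (not_lt.mpr (hlov.2.2 y hIadj))
        refine ⟨w, ?_, hr⟩
        rw [mates_erase_right hne]
        exact Finset.mem_erase.mpr ⟨hwp, hwm⟩
    · have hb : (erasePQ I p q).b x = I.b x := if_neg (by tauto)
      have hm : mates (C.erase s(p, q)) x = mates C x := mates_erase_of_ne hxp hxq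
      rcases hw with h | ⟨w, hwm, hr⟩
      · left
        show (mates (C.erase s(p, q)) x).card < (erasePQ I p q).b x
        rw [hb, hm]; exact h
      · right
        exact ⟨w, by rwa [hm], hr⟩

lemma willing_erase_up {C : Finset (Sym2 P)} {x y : P}
    (hpqC : s(p, q) ∈ C)
    (hw : (erasePQ I p q).Willing (C.erase s(p, q)) x y) : I.Willing C x y := by
  have hne : p ≠ q := hlov.1.ne
  by_cases hxp : x = p
  · subst hxp
    have hqm : q ∈ mates C x := mem_mates.mpr hpqC
    have h1 : 1 ≤ (mates C x).card := Finset.card_pos.mpr ⟨q, hqm⟩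
    have hcard : (mates (C.erase s(x, q)) x).card = (mates C x).card - 1 := by
      rw [mates_erase_left hne, Finset.card_erase_of_mem hqm]
    rcases hw with h | ⟨w, hwm, hr⟩
    · left
      have hb : (erasePQ I x q).b x = I.b x - 1 := if_pos (Or.inl rfl)
      rw [UnderMated, hcard, hb] at h
      rw [UnderMated]
      omega
    · right
      rw [mates_erase_left hne] at hwm
      exact ⟨w, Finset.mem_of_mem_erase hwm, hr⟩
  · by_cases hxq : x = q
    · subst hxq
      have hpm : p ∈ mates C x := mem_mates.mpr (by rwa [Sym2.eq_swap])
      have h1 : 1 ≤ (mates C x).card := Finset.card_pos.mpr ⟨p, hpm⟩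
      have hcard : (mates (C.erase s(p, x)) x).card = (mates C x).card - 1 := by
        rw [mates_erase_right hne, Finset.card_erase_of_mem hpm]
      rcases hw with h | ⟨w, hwm, hr⟩
      · left
        have hb : (erasePQ I p x).b x = I.b x - 1 := if_pos (Or.inr rfl)
        rw [UnderMated, hcard, hb] at h
        rw [UnderMated]
        omega
      · right
        rw [mates_erase_right hne] at hwm
        exact ⟨w, Finset.mem_of_mem_erase hwm, hr⟩
    · have hb : (erasePQ I p q).b x = I.b x := if_neg (by tauto)
      have hm : mates (C.erase s(p, q)) x = mates C x := mates_erase_of_ne hxp hxq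
      rcases hw with h | ⟨w, hwm, hr⟩
      · left
        rw [UnderMated, hm, hb] at h
        exact h
      · right
        exact ⟨w, by rwa [hm] at hwm, hr⟩

lemma blocking_erase_down {C : Finset (Sym2 P)} {x y : P}
    (hpqC : s(p, q) ∈ C) (hb : I.BlockingPair C x y) :
    (erasePQ I p q).BlockingPair (C.erase s(p, q)) x y := by
  have hne : s(x, y) ≠ s(p, q) := fun h => hb.2.1 (h ▸ hpqC)
  refine ⟨⟨hb.1, hne⟩, fun h => hb.2.1 (Finset.mem_of_mem_erase h), ?_, ?_⟩
  · exact willing_erase_down hlov hbp hbq hb.1 hpqC hb.2.2.1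
  · exact willing_erase_down hlov hbp hbq hb.1.symm hpqC hb.2.2.2

lemma blocking_erase_up {C : Finset (Sym2 P)} {x y : P}
    (hpqC : s(p, q) ∈ C) (hb : (erasePQ I p q).BlockingPair (C.erase s(p, q)) x y) :
    I.BlockingPair C x y := by
  refine ⟨hb.1.1, ?_, ?_, ?_⟩
  · intro h
    exact hb.2.1 (Finset.mem_erase.mpr ⟨hb.1.2, h⟩)
  · exact willing_erase_up hlov hbp hbq hpqC hb.2.2.1
  · exact willing_erase_up hlov hbp hbq hpqC hb.2.2.2

lemma config_erase_down {C : Finset (Sym2 P)} (hC : I.IsConfig C) (hpqC : s(p, q) ∈ C) :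
    (erasePQ I p q).IsConfig (C.erase s(p, q)) := by
  have hne : p ≠ q := hlov.1.ne
  constructor
  · intro e he
    have heC := Finset.mem_of_mem_erase he
    have hene := (Finset.mem_erase.mp he).1
    have hIe := hC.1 e heC
    induction e using Sym2.ind with
    | _ a b =>
      rw [SimpleGraph.mem_edgeSet] at hIe ⊢
      exact ⟨hIe, hene⟩
  · intro x
    by_cases hxp : x = p
    · subst hxp
      rw [mates_erase_left hne, Finset.card_erase_of_mem (mem_mates.mpr hpqC)]
      have := hC.2 x
      have hb : (erasePQ I x q).b x = I.b x - 1 := if_pos (Or.inl rfl)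
      rw [hb]; omega
    · by_cases hxq : x = q
      · subst hxq
        rw [mates_erase_right hne,
          Finset.card_erase_of_mem (mem_mates.mpr (by rwa [Sym2.eq_swap]))]
        have := hC.2 x
        have hb : (erasePQ I p x).b x = I.b x - 1 := if_pos (Or.inr rfl)
        rw [hb]; omega
      · rw [mates_erase_of_ne hxp hxq]
        have hb : (erasePQ I p q).b x = I.b x := if_neg (by tauto)
        rw [hb]; exact hC.2 x

lemma stable_erase_down {S : Finset (Sym2 P)} (hS : I.IsStable S) (hpqS : s(p, q) ∈ S) :
    (erasePQ I p q).IsStable (S.erase s(p, q)) :=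
  ⟨config_erase_down hlov hbp hbq hS.1 hpqS,
    fun x y hb => hS.2 x y (blocking_erase_up hlov hbp hbq hpqS hb)⟩

lemma mu_erase_lt : mu (erasePQ I p q) < mu I := by
  have hsum : ∀ x, (erasePQ I p q).b x ≤ I.b x := by
    intro x
    show (if x = p ∨ x = q then I.b x - 1 else I.b x) ≤ I.b x
    split <;> omega
  have hsub : (erasePQ I p q).G.edgeSet ⊆ I.G.edgeSet := by
    intro e
    induction e using Sym2.ind with
    | _ a b => exact fun h => h.1
  have hmem : s(p, q) ∈ I.G.edgeSet := hlov.1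
  have hnmem : s(p, q) ∉ (erasePQ I p q).G.edgeSet := fun h => h.2 rfl
  have hss : (Set.toFinite (erasePQ I p q).G.edgeSet).toFinset ⊂
      (Set.toFinite I.G.edgeSet).toFinset := by
    rw [Set.Finite.toFinset_ssubset_toFinset]
    exact ⟨hsub, fun h => hnmem (h hmem)⟩
  have h1 := Finset.card_lt_card hss
  have h2 : ∑ x, (erasePQ I p q).b x ≤ ∑ x, I.b x := Finset.sum_le_sum fun x _ => hsum x
  unfold mu
  omega

end Erase

lemma key : ∀ (n : ℕ) (I : PrefInstance P), mu I ≤ n → I.Acyclic →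
    ∀ C : Finset (Sym2 P), I.IsConfig C → ¬ I.IsStable C →
    ∃ p q : P, I.BlockingPair C p q ∧ ∀ S : Finset (Sym2 P), I.IsStable S → s(p, q) ∈ S := by
  intro n
  induction n using Nat.strong_induction_on with
  | _ n IH =>
    intro I hmu hacy C hC hunst
    have hbp_ex : ∃ x y, I.BlockingPair C x y := by
      by_contra h
      push_neg at h
      exact hunst ⟨hC, h⟩
    by_cases h0 : ∃ x y, I.G.Adj x y ∧ I.b x = 0
    · -- prune zero-quota incident edges
      obtain ⟨x0, y0, hadj0, hb0⟩ := h0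
      set J := pruneZero I with hJ
      have hmuJ : mu J < n := lt_of_lt_of_le (mu_prune_lt hadj0 hb0) hmu
      have hunstJ : ¬ J.IsStable C := by
        intro hst
        obtain ⟨x, y, hxy⟩ := hbp_ex
        exact hst.2 x y (blocking_prune_down hC hxy)
      obtain ⟨x, y, hxy, hmem⟩ := IH (mu J) hmuJ J le_rfl
        (acyclic_of_le (fun _ _ h => h.1) rfl hacy) C (config_prune hC) hunstJ
      exact ⟨x, y, blocking_prune_up hxy, fun S hS => hmem S (stable_prune_down hS)⟩
    · push_neg at h0
      have hpos : ∀ x y, I.G.Adj x y → I.b x ≠ 0 := fun x y h => h0 x y h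
      obtain ⟨x0, y0, hb0⟩ := id hbp_ex
      obtain ⟨p, q, hlov⟩ := exists_loving I hacy hb0.1
      have hpadj : I.G.Adj p q := hlov.1
      have hbp : I.b p ≠ 0 := hpos p q hpadj
      have hbq : I.b q ≠ 0 := hpos q p hpadj.symm
      have claim1 : ∀ S : Finset (Sym2 P), I.IsStable S → s(p, q) ∈ S := by
        intro S hS
        by_contra hmem
        refine hS.2 p q ⟨hpadj, hmem, ?_, ?_⟩
        · by_cases hund : I.UnderMated S p
          · exact Or.inl hund
          · right
            rw [UnderMated, not_lt] at hund
            have : 0 < (mates S p).card := by omega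
            obtain ⟨w, hw⟩ := Finset.card_pos.mp this
            have hadjw : I.G.Adj p w := (hS.1.1 _ (mem_mates.mp hw))
            have hle : I.rank p q ≤ I.rank p w := hlov.2.1 w hadjw
            have hwq : w ≠ q := fun h => hmem (h ▸ mem_mates.mp hw)
            refine ⟨w, hw, lt_of_le_of_ne hle fun h => hwq ?_⟩
            exact (I.rank_injOn p hpadj hadjw h).symm
        · by_cases hund : I.UnderMated S q
          · exact Or.inl hund
          · right
            rw [UnderMated, not_lt] at hund
            have : 0 < (mates S q).card := by omega
            obtain ⟨w, hw⟩ := Finset.card_pos.mp this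
            have hadjw : I.G.Adj q w := (hS.1.1 _ (mem_mates.mp hw))
            have hle : I.rank q p ≤ I.rank q w := hlov.2.2 w hadjw
            have hwp : w ≠ p := fun h => hmem (by
              rw [Sym2.eq_swap]; exact h ▸ mem_mates.mp hw)
            refine ⟨w, hw, lt_of_le_of_ne hle fun h => hwp ?_⟩
            exact (I.rank_injOn q hpadj.symm hadjw h).symm
      by_cases hin : s(p, q) ∈ C
      · -- recurse on the reduced instance
        set J := erasePQ I p q with hJ
        have hmuJ : mu J < n := lt_of_lt_of_le (mu_erase_lt hlov hbp hbq) hmu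
        have hunstJ : ¬ J.IsStable (C.erase s(p, q)) := by
          intro hst
          obtain ⟨x, y, hxy⟩ := hbp_ex
          exact hst.2 x y (blocking_erase_down hlov hbp hbq hin hxy)
        obtain ⟨x, y, hxy, hmem⟩ := IH (mu J) hmuJ J le_rfl
          (acyclic_of_le (fun _ _ h => h.1) rfl hacy) (C.erase s(p, q))
          (config_erase_down hlov hbp hbq hC hin) hunstJ
        refine ⟨x, y, blocking_erase_up hlov hbp hbq hin hxy, fun S hS => ?_⟩
        exact Finset.mem_of_mem_erase
          (hmem _ (stable_erase_down hlov hbp hbq hS (claim1 S hS)))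
      · -- the loving pair itself is a blocking pair
        refine ⟨p, q, ⟨hpadj, hin, ?_, ?_⟩, claim1⟩
        · by_cases hund : I.UnderMated C p
          · exact Or.inl hund
          · right
            rw [UnderMated, not_lt] at hund
            have : 0 < (mates C p).card := by omega
            obtain ⟨w, hw⟩ := Finset.card_pos.mp this
            have hadjw : I.G.Adj p w := (hC.1 _ (mem_mates.mp hw))
            have hle : I.rank p q ≤ I.rank p w := hlov.2.1 w hadjw
            have hwq : w ≠ q := fun h => hin (h ▸ mem_mates.mp hw)
            refine ⟨w, hw, lt_of_le_of_ne hle fun h => hwq ?_⟩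
            exact (I.rank_injOn p hpadj hadjw h).symm
        · by_cases hund : I.UnderMated C q
          · exact Or.inl hund
          · right
            rw [UnderMated, not_lt] at hund
            have : 0 < (mates C q).card := by omega
            obtain ⟨w, hw⟩ := Finset.card_pos.mp this
            have hadjw : I.G.Adj q w := (hC.1 _ (mem_mates.mp hw))
            have hle : I.rank q p ≤ I.rank q w := hlov.2.2 w hadjw
            have hwp : w ≠ p := fun h => hin (by
              rw [Sym2.eq_swap]; exact h ▸ mem_mates.mp hw)
            refine ⟨w, hw, lt_of_le_of_ne hle fun h => hwp ?_⟩
            exact (I.rank_injOn q hpadj.symm hadjw h).symm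

/-- In an acyclic instance, every configuration that is not
stable admits a blocking pair belonging to the unique stable configuration. -/
theorem acyclic_blockingPair_in_stable (I : PrefInstance P) (hI : I.Acyclic)
    (C : Finset (Sym2 P)) (hC : I.IsConfig C) (hunstable : ¬ I.IsStable C) :
    ∃ p q : P, I.BlockingPair C p q ∧
      ∀ S : Finset (Sym2 P), I.IsStable S → s(p, q) ∈ S :=
  key (mu I) I le_rfl hI C hC hunstable
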